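/- Let Δ be a pure d-dimensional simplicial complex on a finite vertex set in which every (d-1)-dimensional face is contained in at least two d-dimensional faces. Then for every 0 ≤ i ≤ d-1, f_i(Δ) ≤ (1/2) · C(d+1, i+1) · f_d(Δ), and consequently ∑_{i=0}^{d} f_i(Δ) ≤ 2^d · f_d(Δ). -/
import Mathlib


open Finset

/-- Let `Δ` be a pure `d`-dimensional simplicial complex in which every
`(d-1)`-dimensional face is contained in at least two `d`-dimensional faces.
Then for every `0 ≤ i ≤ d-1` one has `f_i(Δ) ≤ (1/2) C(d+1, i+1) f_d(Δ)`
(stated as `2 f_i(Δ) ≤ C(d+1, i+1) f_d(Δ)`), and consequently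
`∑_{i=0}^{d} f_i(Δ) ≤ 2^d · f_d(Δ)`. -/
theorem stmt_13 {V : Type*} [DecidableEq V]
    (Δ : Finset (Finset V)) (d : ℕ)
    (hΔ : ∀ s ∈ Δ, ∀ t ⊆ s, t ∈ Δ)
    (hdim : ∀ s ∈ Δ, s.card ≤ d + 1)
    (hpure : ∀ s ∈ Δ, ∃ t ∈ Δ, t.card = d + 1 ∧ s ⊆ t)
    (hridge : ∀ s ∈ Δ, s.card = d →
      2 ≤ (Δ.filter fun t => t.card = d + 1 ∧ s ⊆ t).card) :
    (∀ i < d, 2 * (Δ.filter fun s => s.card = i + 1).card ≤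
        (d + 1).choose (i + 1) * (Δ.filter fun s => s.card = d + 1).card) ∧
      ∑ i ∈ Finset.range (d + 1), (Δ.filter fun s => s.card = i + 1).card ≤
        2 ^ d * (Δ.filter fun s => s.card = d + 1).card := by
  set B : Finset (Finset V) := Δ.filter fun s => s.card = d + 1 with hB
  -- every face of card ≤ d is contained in at least two facets
  have hlow : ∀ s ∈ Δ, s.card ≤ d →
      2 ≤ (B.filter fun t => s ⊆ t).card := by
    intro s hs hsc
    obtain ⟨u, hu, huc, hsu⟩ := hpure s hs
    obtain ⟨r, hsr, hru, hrc⟩ :=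
      Finset.exists_subsuperset_card_eq hsu hsc (by omega : d ≤ u.card)
    have hr : r ∈ Δ := hΔ u hu r hru
    have h2 := hridge r hr hrc
    refine le_trans h2 (Finset.card_le_card ?_)
    intro t ht
    simp only [Finset.mem_filter, hB] at ht ⊢
    exact ⟨⟨ht.1, ht.2.1⟩, hsr.trans ht.2.2⟩
  have part1 : ∀ i < d, 2 * (Δ.filter fun s => s.card = i + 1).card ≤
      (d + 1).choose (i + 1) * B.card := by
    intro i hi
    set A : Finset (Finset V) := Δ.filter fun s => s.card = i + 1 with hA
    have key : ∑ s ∈ A, (B.filter fun t => s ⊆ t).card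
        = ∑ t ∈ B, (A.filter fun s => s ⊆ t).card := by
      simp_rw [Finset.card_filter]
      rw [Finset.sum_comm]
    have h1 : 2 * A.card ≤ ∑ s ∈ A, (B.filter fun t => s ⊆ t).card := by
      calc 2 * A.card = ∑ _s ∈ A, 2 := by rw [Finset.sum_const, smul_eq_mul, mul_comm]
        _ ≤ _ := ?_
      refine Finset.sum_le_sum fun s hs => ?_
      simp only [hA, Finset.mem_filter] at hs
      exact hlow s hs.1 (by omega)
    have h2 : ∀ t ∈ B, (A.filter fun s => s ⊆ t).card = (d + 1).choose (i + 1) := by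
      intro t ht
      simp only [hB, Finset.mem_filter] at ht
      have : (A.filter fun s => s ⊆ t) = t.powersetCard (i + 1) := by
        ext s
        simp only [hA, Finset.mem_filter, Finset.mem_powersetCard]
        constructor
        · rintro ⟨⟨_, hc⟩, hst⟩; exact ⟨hst, hc⟩
        · rintro ⟨hst, hc⟩; exact ⟨⟨hΔ t ht.1 s hst, hc⟩, hst⟩
      rw [this, Finset.card_powersetCard, ht.2]
    calc 2 * A.card ≤ ∑ s ∈ A, (B.filter fun t => s ⊆ t).card := h1
      _ = ∑ t ∈ B, (A.filter fun s => s ⊆ t).card := key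
      _ = ∑ t ∈ B, (d + 1).choose (i + 1) := Finset.sum_congr rfl h2
      _ = (d + 1).choose (i + 1) * B.card := by rw [Finset.sum_const, smul_eq_mul, mul_comm]
  refine ⟨part1, ?_⟩
  -- sum of binomials
  have hbin : ∑ i ∈ Finset.range d, (d + 1).choose (i + 1) = 2 ^ (d + 1) - 2 := by
    have h0 : ∑ i ∈ Finset.range (d + 2), (d + 1).choose i = 2 ^ (d + 1) :=
      Nat.sum_range_choose (d + 1)
    rw [Finset.sum_range_succ'] at h0
    rw [Finset.sum_range_succ] at h0
    simp only [Nat.choose_zero_right, Nat.choose_self] at h0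
    omega
  have hsum : 2 * ∑ i ∈ Finset.range d, (Δ.filter fun s => s.card = i + 1).card ≤
      (2 ^ (d + 1) - 2) * B.card := by
    rw [Finset.mul_sum, ← hbin, Finset.sum_mul]
    exact Finset.sum_le_sum fun i hi => part1 i (Finset.mem_range.mp hi)
  have hpow : 2 * 2 ^ d = 2 ^ (d + 1) := by ring
  have hpos : (1 : ℕ) ≤ 2 ^ d := Nat.one_le_two_pow
  have hhalf : ∑ i ∈ Finset.range d, (Δ.filter fun s => s.card = i + 1).card ≤
      (2 ^ d - 1) * B.card := by
    have : (2 ^ (d + 1) - 2) * B.card = 2 * ((2 ^ d - 1) * B.card) := by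
      rw [← mul_assoc]
      congr 1
      omega
    omega
  rw [Finset.sum_range_succ, ← hB]
  have hm : B.card ≤ 2 ^ d * B.card := Nat.le_mul_of_pos_left _ (by positivity)
  have hsub : (2 ^ d - 1) * B.card = 2 ^ d * B.card - B.card := by rw [Nat.sub_one_mul]
  omega
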